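/- Assume the SICA parameters are positive and the incidence function f satisfies (H1)–(H3). If R₀ > 1, then there exists a unique solution (S*, I*, C*, A*) of the equilibrium system with S* ∈ (0, Λ/μ), I* > 0, C* > 0 and A* > 0 (the endemic equilibrium). -/

import Mathlib

/- STATEMENT 9: Assume positive SICA parameters and f satisfying (H1)–(H3).
If R₀ > 1, then there exists a unique solution (S*, I*, C*, A*) of the
equilibrium system with S* ∈ (0, Λ/μ), I* > 0, C* > 0 and A* > 0
(the endemic equilibrium). -/
theorem stmt_9 (Λ μ ρ φ σ ω d ξ₁ ξ₂ ξ₃ D S₀ R₀ : ℝ)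
    (hΛ : 0 < Λ) (hμ : 0 < μ) (hρ : 0 < ρ) (hφ : 0 < φ) (hσ : 0 < σ)
    (hω : 0 < ω) (hd : 0 < d)
    (hξ₁ : ξ₁ = ρ + φ + μ) (hξ₂ : ξ₂ = ω + μ) (hξ₃ : ξ₃ = σ + μ + d)
    (hD : D = μ * (ξ₂ * (ξ₃ + ρ) + φ * ξ₃ + ρ * d) + ρ * ω * d)
    (hS₀ : S₀ = Λ / μ)
    (f : ℝ → ℝ → ℝ)
    (hR₀def : R₀ = f S₀ 0 * ξ₂ * ξ₃ / D)
    (hR₀ : 1 < R₀)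
    (hf_nonneg : ∀ S I : ℝ, 0 ≤ S → 0 ≤ I → 0 ≤ f S I)
    (hf_cont : ContinuousOn (fun p : ℝ × ℝ => f p.1 p.2) (Set.Ici 0 ×ˢ Set.Ici 0))
    (hf_cd : ContDiffOn ℝ 1 (fun p : ℝ × ℝ => f p.1 p.2) (Set.Ioi 0 ×ˢ Set.Ioi 0))
    (hH1 : ∀ I : ℝ, 0 ≤ I → f 0 I = 0)
    (hH2 : ∀ S I : ℝ, 0 < S → 0 ≤ I → 0 < deriv (fun s => f s I) S)
    (hH3 : ∀ S I : ℝ, 0 ≤ S → 0 ≤ I → deriv (fun i => f S i) I ≤ 0) :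
    ∃! p : ℝ × ℝ × ℝ × ℝ,
      (0 < p.1 ∧ p.1 < Λ / μ ∧ 0 < p.2.1 ∧ 0 < p.2.2.1 ∧ 0 < p.2.2.2) ∧
      Λ - μ * p.1 - f p.1 p.2.1 * p.2.1 = 0 ∧
      f p.1 p.2.1 * p.2.1 - ξ₁ * p.2.1 + σ * p.2.2.2 + ω * p.2.2.1 = 0 ∧
      φ * p.2.1 - ξ₂ * p.2.2.1 = 0 ∧
      ρ * p.2.1 - ξ₃ * p.2.2.2 = 0 := by
  have hξ₂p : 0 < ξ₂ := by rw [hξ₂]; positivity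
  have hξ₃p : 0 < ξ₃ := by rw [hξ₃]; positivity
  have hDp : 0 < D := by rw [hD, hξ₂, hξ₃]; positivity
  obtain ⟨k, hkdef⟩ : ∃ x : ℝ, x = ξ₁ - σ * ρ / ξ₃ - ω * φ / ξ₂ := ⟨_, rfl⟩
  have hkey : k * (ξ₂ * ξ₃) = D := by
    rw [hkdef, hD, hξ₁, hξ₂, hξ₃]
    field_simp
    ring
  have hkpos : 0 < k := by nlinarith [mul_pos hξ₂p hξ₃p]
  have hkeq : k - ξ₁ + σ * ρ / ξ₃ + ω * φ / ξ₂ = 0 := by rw [hkdef]; ring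
  have hfS₀k : f S₀ 0 = R₀ * k := by
    rw [hR₀def, ← hkey]
    field_simp
  have hS₀pos : 0 < S₀ := by rw [hS₀]; positivity
  have hμS₀ : μ * S₀ = Λ := by rw [hS₀]; field_simp
  -- strict monotonicity in S
  have hmono : ∀ I : ℝ, 0 ≤ I → ∀ S₁ S₂ : ℝ, 0 ≤ S₁ → S₁ < S₂ → f S₁ I < f S₂ I := by
    intro I hI S₁ S₂ hS₁ h12
    have hc : ContinuousOn (fun s => f s I) (Set.Icc S₁ S₂) := by
      have h1 : ContinuousOn (fun s : ℝ => ((s, I) : ℝ × ℝ)) (Set.Icc S₁ S₂) :=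
        (continuous_id.prodMk continuous_const).continuousOn
      exact hf_cont.comp h1 (fun s hs => Set.mem_prod.2 ⟨le_trans hS₁ hs.1, hI⟩)
    have hsm : StrictMonoOn (fun s => f s I) (Set.Icc S₁ S₂) := by
      apply strictMonoOn_of_deriv_pos (convex_Icc S₁ S₂) hc
      intro x hx
      rw [interior_Icc] at hx
      exact hH2 x I (lt_of_le_of_lt hS₁ hx.1) hI
    exact hsm (Set.left_mem_Icc.2 h12.le) (Set.right_mem_Icc.2 h12.le) h12
  -- antitonicity in I
  have hanti : ∀ S : ℝ, 0 < S → ∀ I₁ I₂ : ℝ, 0 < I₁ → I₁ ≤ I₂ → f S I₂ ≤ f S I₁ := by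
    intro S hS I₁ I₂ hI₁ h12
    have hc : ContinuousOn (fun i => f S i) (Set.Icc I₁ I₂) := by
      have h1 : ContinuousOn (fun i : ℝ => ((S, i) : ℝ × ℝ)) (Set.Icc I₁ I₂) :=
        (continuous_const.prodMk continuous_id).continuousOn
      exact hf_cont.comp h1 (fun i hi => Set.mem_prod.2 ⟨hS.le, le_trans hI₁.le hi.1⟩)
    have hdiff : DifferentiableOn ℝ (fun i => f S i) (interior (Set.Icc I₁ I₂)) := by
      intro x hx
      rw [interior_Icc] at hx
      have hx0 : 0 < x := lt_trans hI₁ hx.1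
      have hmem : ((S, x) : ℝ × ℝ) ∈ Set.Ioi (0:ℝ) ×ˢ Set.Ioi (0:ℝ) := Set.mem_prod.2 ⟨hS, hx0⟩
      have hopen : IsOpen (Set.Ioi (0:ℝ) ×ˢ Set.Ioi (0:ℝ)) := isOpen_Ioi.prod isOpen_Ioi
      have hFd : DifferentiableAt ℝ (fun p : ℝ × ℝ => f p.1 p.2) (S, x) :=
        ((hf_cd.differentiableOn one_ne_zero) (S, x) hmem).differentiableAt (hopen.mem_nhds hmem)
      have hcurve : DifferentiableAt ℝ (fun i : ℝ => ((S, i) : ℝ × ℝ)) x :=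
        (differentiableAt_const S).prodMk differentiableAt_id
      exact (hFd.comp x hcurve).differentiableWithinAt
    have haot : AntitoneOn (fun i => f S i) (Set.Icc I₁ I₂) := by
      apply antitoneOn_of_deriv_nonpos (convex_Icc I₁ I₂) hc hdiff
      intro x hx
      rw [interior_Icc] at hx
      exact hH3 S x hS.le (lt_trans hI₁ hx.1).le
    exact haot (Set.left_mem_Icc.2 h12) (Set.right_mem_Icc.2 h12) h12
  -- existence via IVT
  obtain ⟨g, hgdef⟩ : ∃ g : ℝ → ℝ, g = fun S => f S ((Λ - μ * S) / k) := ⟨_, rfl⟩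
  have hgc : ContinuousOn g (Set.Icc 0 S₀) := by
    rw [hgdef]
    have h1 : ContinuousOn (fun S : ℝ => ((S, (Λ - μ * S) / k) : ℝ × ℝ)) (Set.Icc 0 S₀) := by
      apply Continuous.continuousOn
      fun_prop
    refine hf_cont.comp h1 ?_
    intro s hs
    refine Set.mem_prod.2 ⟨hs.1, ?_⟩
    have h2 : μ * s ≤ Λ := by nlinarith [hs.2]
    exact div_nonneg (by linarith) hkpos.le
  have hg0 : g 0 = 0 := by
    rw [hgdef]
    simp only [mul_zero, sub_zero]
    exact hH1 (Λ / k) (by positivity)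
  have hgS₀ : g S₀ = R₀ * k := by
    rw [hgdef]
    simp only
    rw [show Λ - μ * S₀ = 0 by linarith, zero_div, hfS₀k]
  have hkmem : k ∈ Set.Icc (g 0) (g S₀) := by
    rw [hg0, hgS₀]
    constructor
    · exact hkpos.le
    · nlinarith
  obtain ⟨S, hSmem, hgS⟩ := intermediate_value_Icc hS₀pos.le hgc hkmem
  have hSpos : 0 < S := by
    rcases lt_or_eq_of_le hSmem.1 with h | h
    · exact h
    · exfalso; rw [← h] at hgS; rw [hg0] at hgS; exact hkpos.ne hgS
  have hSlt : S < S₀ := by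
    rcases lt_or_eq_of_le hSmem.2 with h | h
    · exact h
    · exfalso; rw [h] at hgS; rw [hgS₀] at hgS; nlinarith
  have hΛμS : 0 < Λ - μ * S := by nlinarith
  obtain ⟨I, hIdef⟩ : ∃ x : ℝ, x = (Λ - μ * S) / k := ⟨_, rfl⟩
  have hIpos : 0 < I := by rw [hIdef]; exact div_pos hΛμS hkpos
  have hfSI : f S I = k := by
    rw [hgdef] at hgS
    simp only at hgS
    rw [hIdef]
    exact hgS
  have hkI : k * I = Λ - μ * S := by
    rw [hIdef]; field_simp
  -- a general uniqueness fact: two solutions of the reduced system coincide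
  have huniq : ∀ S₁ I₁ S₂ I₂ : ℝ, 0 < S₁ → 0 < I₁ → 0 < S₂ → 0 < I₂ →
      f S₁ I₁ = k → f S₂ I₂ = k → μ * S₁ + k * I₁ = Λ → μ * S₂ + k * I₂ = Λ →
      S₁ = S₂ ∧ I₁ = I₂ := by
    intro S₁ I₁ S₂ I₂ hS₁ hI₁ hS₂ hI₂ hf₁ hf₂ he₁ he₂
    have key : ∀ a b ia ib : ℝ, 0 < a → 0 < ia → 0 < b → 0 < ib →
        f a ia = k → f b ib = k → μ * a + k * ia = Λ → μ * b + k * ib = Λ →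
        ¬ (a < b) := by
      intro a b ia ib ha hia hb hib hfa hfb hea heb hab
      have hiab : ib < ia := by
        by_contra hcon
        push_neg at hcon
        have h3 : k * ia ≤ k * ib := mul_le_mul_of_nonneg_left hcon hkpos.le
        have h4 : μ * a < μ * b := (mul_lt_mul_iff_right₀ hμ).2 hab
        linarith
      have h1 : f a ia ≤ f a ib := hanti a ha ib ia hib hiab.le
      have h2 : f a ib < f b ib := hmono ib hib.le a b ha.le hab
      rw [hfa] at h1
      rw [hfb] at h2
      linarith
    have hSeq : S₁ = S₂ := by
      rcases lt_trichotomy S₁ S₂ with h | h | h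
      · exact absurd h (key S₁ S₂ I₁ I₂ hS₁ hI₁ hS₂ hI₂ hf₁ hf₂ he₁ he₂)
      · exact h
      · exact absurd h (key S₂ S₁ I₂ I₁ hS₂ hI₂ hS₁ hI₁ hf₂ hf₁ he₂ he₁)
    refine ⟨hSeq, ?_⟩
    have : k * I₁ = k * I₂ := by rw [hSeq] at he₁; linarith
    exact mul_left_cancel₀ hkpos.ne' this
  refine ⟨(S, I, φ * I / ξ₂, ρ * I / ξ₃), ⟨⟨hSpos, by rw [← hS₀]; exact hSlt, hIpos,
    by positivity, by positivity⟩, ?_, ?_, ?_, ?_⟩, ?_⟩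
  · simp only
    rw [hfSI]
    linarith [hkI]
  · simp only
    rw [hfSI]
    linear_combination I * hkeq
  · simp only
    field_simp
    ring
  · simp only
    field_simp
    ring
  · rintro ⟨S', I', C', A'⟩ ⟨⟨hS'p, hS'lt, hI'p, hC'p, hA'p⟩, e1, e2, e3, e4⟩
    simp only at e1 e2 e3 e4
    have hC' : C' = φ * I' / ξ₂ := by
      field_simp
      linear_combination -e3
    have hA' : A' = ρ * I' / ξ₃ := by
      field_simp
      linear_combination -e4
    rw [hC', hA'] at e2
    have hf' : f S' I' = k := by
      have h : f S' I' * I' = k * I' := by linear_combination e2 - I' * hkeq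
      exact mul_right_cancel₀ hI'p.ne' h
    have he1' : μ * S' + k * I' = Λ := by linear_combination -e1 - I' * hf'
    have he1 : μ * S + k * I = Λ := by linarith [hkI]
    obtain ⟨hSeq, hIeq⟩ := huniq S' I' S I hS'p hI'p hSpos hIpos hf' hfSI he1' he1
    simp only [Prod.mk.injEq]
    exact ⟨hSeq, hIeq, by rw [hC', hIeq], by rw [hA', hIeq]⟩
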